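/- TRDM is truthful-referral: fix pairwise distinct bids b_i ≥ 0 and an agent i whose bid is at least its true valuation (b_i ≥ v_i ≥ 0). Let E' be any subset of the out-edges of i, and let G' be the tree obtained from G by deleting the edges in E' together with all vertices no longer reachable from s; run TRDM on G' with the remaining agents keeping the same bids. Then agent i's utility under TRDM on G' is at most its utility under TRDM on G. In particular, reporting all of one's children (E' = ∅) weakly dominates hiding any of them. -/

import Mathlib

open Classical

/-- A finite directed tree rooted at the seller `s`: every vertex reaches `s`
by iterating the parent map, and the root is its own parent. The agents are
the non-root vertices. -/
structure DiffusionTree (α : Type*) where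
  s : α
  parent : α → α
  parent_s : parent s = s
  reaches_s : ∀ x : α, ∃ n : ℕ, parent^[n] x = s

namespace DiffusionTree

variable {α : Type*} [Fintype α]

/-- The set of agents: all vertices except the seller. -/
noncomputable def agents (T : DiffusionTree α) : Finset α :=
  Finset.univ.filter (fun x => x ≠ T.s)

/-- `T.desc i j` : `j` is a strict descendant of `i`. -/
def desc (T : DiffusionTree α) (i j : α) : Prop :=
  ∃ n : ℕ, 0 < n ∧ T.parent^[n] j = i

/-- `V_{-i}` relative to the active agent set `A`: remove `i` and its descendants. -/
noncomputable def Vminus (T : DiffusionTree α) (A : Finset α) (i : α) : Finset α :=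
  A.filter (fun j => j ≠ i ∧ ¬ T.desc i j)

/-- `b*_S`: the highest bid in `S`, with `b*_∅ = 0`. -/
noncomputable def bstar (b : α → ℝ) (S : Finset α) : ℝ :=
  WithBot.unbotD 0 ((S.image b).max)

/-- Distance from a vertex to the root. -/
noncomputable def depth (T : DiffusionTree α) (x : α) : ℕ :=
  Nat.find (T.reaches_s x)

/-- The vertex `a_j` on the path `s = a_0, a_1, …, a_k = w` from `s` to `w`. -/
noncomputable def pathVx (T : DiffusionTree α) (w : α) (j : ℕ) : α :=
  T.parent^[T.depth w - j] w

/-- TRDM payments, on the active agent set `A`, for bids `b` and winner `w`: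
the winner pays `b*_{V_{-w}}`; an intermediate path agent `a_j` pays
`b*_{V_{-a_j}} − b*_{V_{-a_{j+1}}}`; everyone else pays `0`. -/
noncomputable def payment (T : DiffusionTree α) (A : Finset α) (b : α → ℝ)
    (w : α) (x : α) : ℝ :=
  if x = w then bstar b (T.Vminus A w)
  else if ∃ j : ℕ, 1 ≤ j ∧ j < T.depth w ∧ T.pathVx w j = x then
    bstar b (T.Vminus A x) - bstar b (T.Vminus A (T.pathVx w (T.depth x + 1)))
  else 0

/-- TRDM utility of an agent `i` with true valuation `v`. -/
noncomputable def util (T : DiffusionTree α) (A : Finset α) (b : α → ℝ)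
    (w : α) (v : ℝ) (i : α) : ℝ :=
  (if i = w then v else 0) - T.payment A b w i

end DiffusionTree

namespace DiffusionTree

variable {α : Type*} [Fintype α] (T : DiffusionTree α)

lemma iterate_s (n : ℕ) : T.parent^[n] T.s = T.s := by
  induction n with
  | zero => rfl
  | succ n ih => rw [Function.iterate_succ_apply', ih, T.parent_s]

lemma depth_spec (x : α) : T.parent^[T.depth x] x = T.s := Nat.find_spec (T.reaches_s x)

lemma depth_s : T.depth T.s = 0 := by
  have : T.parent^[0] T.s = T.s := rfl
  exact Nat.le_zero.mp (Nat.find_min' _ this)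

lemma depth_add {i j : α} (hi : i ≠ T.s) {n : ℕ} (h : T.parent^[n] j = i) :
    T.depth j = T.depth i + n := by
  have hle : T.depth j ≤ T.depth i + n :=
    Nat.find_min' _ (by rw [Function.iterate_add_apply, h]; exact T.depth_spec i)
  have hnle : n ≤ T.depth j := by
    by_contra hlt
    push_neg at hlt
    have hs : T.parent^[n] j = T.s := by
      have hn : n = (n - T.depth j) + T.depth j := (Nat.sub_add_cancel hlt.le).symm
      rw [hn, Function.iterate_add_apply, T.depth_spec j, T.iterate_s]
    exact hi (h.symm.trans hs)
  have h2 : T.parent^[T.depth j - n] i = T.s := by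
    rw [← h, ← Function.iterate_add_apply, Nat.sub_add_cancel hnle]
    exact T.depth_spec j
  have h3 : T.depth i ≤ T.depth j - n := Nat.find_min' (T.reaches_s i) h2
  omega

lemma depth_pos {i : α} (hi : i ≠ T.s) : 0 < T.depth i := by
  rcases Nat.eq_zero_or_pos (T.depth i) with h | h
  · have := T.depth_spec i
    rw [h] at this
    exact absurd this hi
  · exact h

lemma not_desc_self {i : α} (hi : i ≠ T.s) : ¬ T.desc i i := by
  rintro ⟨n, hn, h⟩
  have := T.depth_add hi h
  omega

lemma desc_trans {i j k : α} (h1 : T.desc i j) (h2 : T.desc j k) : T.desc i k := by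
  obtain ⟨n, hn, h1⟩ := h1; obtain ⟨m, hm, h2⟩ := h2
  exact ⟨n + m, by omega, by rw [Function.iterate_add_apply, h2, h1]⟩

lemma desc_parent {c i : α} (h : T.parent c = i) : T.desc i c :=
  ⟨1, one_pos, by simpa using h⟩

lemma desc_asymm {i j : α} (hi : i ≠ T.s) (h1 : T.desc i j) (h2 : T.desc j i) : False :=
  T.not_desc_self hi (T.desc_trans h1 h2)

lemma desc_ne {i j : α} (hi : i ≠ T.s) (h : T.desc i j) : j ≠ i := by
  rintro rfl; exact T.not_desc_self hi h

lemma onpath_iff {i t : α} (hi : i ≠ T.s) :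
    (∃ j : ℕ, 1 ≤ j ∧ j < T.depth t ∧ T.pathVx t j = i) ↔ T.desc i t := by
  constructor
  · rintro ⟨j, h1, h2, h3⟩
    exact ⟨T.depth t - j, by omega, h3⟩
  · rintro ⟨n, hn, h⟩
    have hd := T.depth_add hi h
    refine ⟨T.depth i, T.depth_pos hi, by omega, ?_⟩
    unfold pathVx
    rw [show T.depth t - T.depth i = n by omega, h]

lemma desc_pathVx_succ {i t : α} (hi : i ≠ T.s) (h : T.desc i t) :
    T.desc i (T.pathVx t (T.depth i + 1)) := by
  obtain ⟨n, hn, hh⟩ := h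
  have hd := T.depth_add hi hh
  refine ⟨1, one_pos, ?_⟩
  unfold pathVx
  rw [show T.depth t - (T.depth i + 1) = n - 1 by omega]
  calc T.parent^[1] (T.parent^[n - 1] t) = T.parent^[1 + (n - 1)] t :=
        (Function.iterate_add_apply _ _ _ _).symm
    _ = i := by rw [show 1 + (n - 1) = n by omega, hh]

lemma pathVx_eq_child {i t c : α} (hi : i ≠ T.s) (hc : T.parent c = i)
    (h : t = c ∨ T.desc c t) : T.pathVx t (T.depth i + 1) = c := by
  have hdc : T.depth c = T.depth i + 1 :=
    T.depth_add hi (show T.parent^[1] c = i by simpa using hc)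
  rcases h with rfl | ⟨m, hm, hmc⟩
  · unfold pathVx
    rw [hdc]
    simp
  · have hcs : c ≠ T.s := by
      intro h
      rw [h, T.depth_s] at hdc
      omega
    have hdt : T.depth t = T.depth c + m := T.depth_add hcs hmc
    unfold pathVx
    rw [show T.depth t - (T.depth i + 1) = m by omega, hmc]

lemma le_bstar {b : α → ℝ} {S : Finset α} {j : α} (h : j ∈ S) : b j ≤ bstar b S := by
  have hmem : b j ∈ S.image b := Finset.mem_image_of_mem b h
  have hle := Finset.le_max hmem
  unfold bstar
  cases hmax : (S.image b).max with
  | bot => rw [hmax] at hle; simp at hle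
  | coe m =>
    rw [hmax] at hle
    rw [WithBot.unbotD_coe]
    exact_mod_cast hle

lemma bstar_le {b : α → ℝ} {S : Finset α} {x : ℝ} (hx : 0 ≤ x)
    (h : ∀ j ∈ S, b j ≤ x) : bstar b S ≤ x := by
  unfold bstar
  cases hmax : (S.image b).max with
  | bot => simpa using hx
  | coe m =>
    obtain ⟨j, hj, hjm⟩ := Finset.mem_image.mp (Finset.mem_of_max hmax)
    rw [WithBot.unbotD_coe]
    exact hjm ▸ h j hj

lemma bstar_nonneg {b : α → ℝ} {S : Finset α} (h : ∀ j ∈ S, 0 ≤ b j) :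
    0 ≤ bstar b S := by
  unfold bstar
  cases hmax : (S.image b).max with
  | bot => simp
  | coe m =>
    obtain ⟨j, hj, hjm⟩ := Finset.mem_image.mp (Finset.mem_of_max hmax)
    rw [WithBot.unbotD_coe]
    exact hjm ▸ h j hj

lemma bstar_mono {b : α → ℝ} {S S' : Finset α} (hb : ∀ j ∈ S', 0 ≤ b j)
    (h : S ⊆ S') : bstar b S ≤ bstar b S' :=
  bstar_le (bstar_nonneg hb) (fun _ hj => le_bstar (h hj))

lemma Vminus_subset_Vminus {S : Finset α} {i a : α} (hi : i ≠ T.s)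
    (hd : T.desc i a) : T.Vminus S i ⊆ T.Vminus S a := by
  intro j hj
  rw [Vminus, Finset.mem_filter] at hj ⊢
  obtain ⟨hjS, hne, hnd⟩ := hj
  refine ⟨hjS, ?_, ?_⟩
  · rintro rfl; exact hnd hd
  · intro h; exact hnd (T.desc_trans hd h)

end DiffusionTree

open DiffusionTree in
/-- TRDM is truthful-referral: fix pairwise distinct nonnegative
bids and an agent `i` whose bid is at least its true valuation (`b_i ≥ v_i ≥ 0`).
Let `E'` be any subset of the out-edges of `i` (identified with the corresponding
set of children of `i`), and let `G'` be the tree obtained by deleting those edges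
together with all vertices no longer reachable from `s` (i.e. keep the agents that
are neither a child in `E'` nor a descendant of one); run TRDM on `G'` with the
remaining agents keeping the same bids. Then agent `i`'s utility under TRDM on
`G'` is at most its utility under TRDM on `G`. -/
theorem trdm_truthful_referral
    {α : Type*} [Fintype α] (T : DiffusionTree α)
    (b : α → ℝ) (hb : ∀ j ∈ T.agents, 0 ≤ b j)
    (hdist : ∀ j ∈ T.agents, ∀ j' ∈ T.agents, j ≠ j' → b j ≠ b j')
    (i : α) (hi : i ∈ T.agents)
    (vi : ℝ) (hvi : 0 ≤ vi) (hbid : vi ≤ b i)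
    (E' : Finset α) (hE' : ∀ c ∈ E', T.parent c = i)
    -- the winner on the full tree `G`: the unique highest bidder among all agents
    (w : α) (hw : w ∈ T.agents)
    (hwmax : ∀ j ∈ T.agents, j ≠ w → b j < b w)
    -- the winner on the reduced tree `G'`: the unique highest bidder among the
    -- agents remaining after the subtrees rooted at the children in `E'` are removed
    (w' : α)
    (hw' : w' ∈ T.agents.filter (fun j => ∀ c ∈ E', j ≠ c ∧ ¬ T.desc c j))
    (hw'max : ∀ j ∈ T.agents.filter (fun j => ∀ c ∈ E', j ≠ c ∧ ¬ T.desc c j),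
      j ≠ w' → b j < b w') :
    T.util (T.agents.filter (fun j => ∀ c ∈ E', j ≠ c ∧ ¬ T.desc c j)) b w' vi i
      ≤ T.util T.agents b w vi i := by
  classical
  set A : Finset α := T.agents with hA
  set A' : Finset α := T.agents.filter (fun j => ∀ c ∈ E', j ≠ c ∧ ¬ T.desc c j) with hA'
  have hA'sub : A' ⊆ A := Finset.filter_subset _ _
  have hAmem : ∀ j, j ∈ A ↔ j ≠ T.s := by
    intro j; simp [hA, agents]
  have his : i ≠ T.s := (hAmem i).mp hi
  have hws : w ≠ T.s := (hAmem w).mp hw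
  have hw'A : w' ∈ A := hA'sub hw'
  have hw's : w' ≠ T.s := (hAmem w').mp hw'A
  have hbA : ∀ j ∈ A, 0 ≤ b j := hb
  -- i belongs to the reduced agent set
  have hiA' : i ∈ A' := by
    rw [hA', Finset.mem_filter]
    refine ⟨hi, fun c hc => ?_⟩
    have hdic : T.desc i c := T.desc_parent (hE' c hc)
    constructor
    · rintro rfl; exact T.not_desc_self his hdic
    · intro h; exact T.not_desc_self his (T.desc_trans hdic h)
  -- removed agents are descendants of i
  have hrm : ∀ j ∈ A, j ∉ A' → T.desc i j := by
    intro j hjA hjA'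
    rw [hA', Finset.mem_filter] at hjA'
    push_neg at hjA'
    obtain ⟨c, hc, hcj⟩ := hjA' hjA
    have hdic : T.desc i c := T.desc_parent (hE' c hc)
    by_cases hjc : j = c
    · exact hjc ▸ hdic
    · exact T.desc_trans hdic (hcj hjc)
  -- V_{-i} is unchanged by the removal
  have hVi : T.Vminus A' i = T.Vminus A i := by
    apply Finset.Subset.antisymm
    · intro j hj
      rw [Vminus, Finset.mem_filter] at hj ⊢
      exact ⟨hA'sub hj.1, hj.2⟩
    · intro j hj
      rw [Vminus, Finset.mem_filter] at hj ⊢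
      refine ⟨?_, hj.2⟩
      by_contra hjA'
      exact hj.2.2 (hrm j hj.1 hjA')
  -- nonnegativity of bstar's arguments
  have hbV : ∀ (S : Finset α) (x : α), S ⊆ A → ∀ j ∈ T.Vminus S x, 0 ≤ b j := by
    intro S x hS j hj
    rw [Vminus, Finset.mem_filter] at hj
    exact hb j (hS hj.1)
  -- Case 1 : i wins in G
  by_cases hiw : i = w
  · subst hiw
    have hw'i : w' = i := by
      by_contra hne
      have h1 : b w' < b i := hwmax w' hw'A hne
      have h2 : b i < b w' := hw'max i hiA' (fun h => hne h.symm)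
      linarith
    subst hw'i
    simp [util, payment, hVi]
  -- Case 2 : i does not win in G
  · -- utility of i in G
    have hutilG : T.util A b w vi i =
        (if T.desc i w then
          bstar b (T.Vminus A (T.pathVx w (T.depth i + 1))) - bstar b (T.Vminus A i)
        else 0) := by
      unfold util payment
      rw [if_neg hiw, if_neg hiw]
      by_cases hd : T.desc i w
      · rw [if_pos ((T.onpath_iff his).mpr hd), if_pos hd]
        ring
      · rw [if_neg (fun h => hd ((T.onpath_iff his).mp h)), if_neg hd]
        ring
    -- the utility of i in G is nonnegative
    have hutilG_nonneg : 0 ≤ T.util A b w vi i := by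
      rw [hutilG]
      by_cases hd : T.desc i w
      · rw [if_pos hd]
        have hsub : T.Vminus A i ⊆ T.Vminus A (T.pathVx w (T.depth i + 1)) :=
          T.Vminus_subset_Vminus his (T.desc_pathVx_succ his hd)
        have := bstar_mono (hbV A _ (le_refl A)) hsub
        linarith
      · rw [if_neg hd]
    -- if i is on the path to w in G, the bid of i bounds bstar below
    have hvi_le : T.desc i w →
        vi ≤ bstar b (T.Vminus A (T.pathVx w (T.depth i + 1))) := by
      intro hd
      have hdia : T.desc i (T.pathVx w (T.depth i + 1)) := T.desc_pathVx_succ his hd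
      have hiV : i ∈ T.Vminus A (T.pathVx w (T.depth i + 1)) := by
        rw [Vminus, Finset.mem_filter]
        refine ⟨hi, ?_, ?_⟩
        · intro h; rw [← h] at hdia; exact T.not_desc_self his hdia
        · intro h; exact T.desc_asymm his hdia h
      exact le_trans hbid (le_bstar hiV)
    -- now analyze the reduced tree
    by_cases hiw' : i = w'
    · -- i wins in G'; then w was removed, so i is on the path to w in G
      subst hiw'
      have hwnA' : w ∉ A' := by
        intro hwA'
        have : w = i := by
          by_contra hne
          have h1 : b i < b w := hwmax i hi (fun h => hiw h)
          have h2 : b w < b i := hw'max w hwA' hne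
          linarith
        exact hiw this.symm
      have hdiw : T.desc i w := hrm w hw hwnA'
      have hutil' : T.util A' b i vi i = vi - bstar b (T.Vminus A i) := by
        simp [util, payment, hVi]
      rw [hutil', hutilG, if_pos hdiw]
      have := hvi_le hdiw
      linarith
    · -- i does not win in G'
      by_cases hd' : T.desc i w'
      · -- i is an intermediate agent on the path to w' in G'
        have hutil' : T.util A' b w' vi i =
            bstar b (T.Vminus A' (T.pathVx w' (T.depth i + 1))) - bstar b (T.Vminus A i) := by
          unfold util payment
          rw [if_neg hiw', if_neg hiw', if_pos ((T.onpath_iff his).mpr hd'), hVi]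
          ring
        rw [hutil']
        by_cases hwA' : w ∈ A'
        · -- the winner is unchanged : w' = w
          have hww' : w' = w := by
            by_contra hne
            have h1 : b w' < b w := hwmax w' hw'A hne
            have h2 : b w < b w' := hw'max w hwA' (fun h => hne h.symm)
            linarith
          subst hww'
          rw [hutilG, if_pos hd']
          have hsub : T.Vminus A' (T.pathVx w' (T.depth i + 1)) ⊆
              T.Vminus A (T.pathVx w' (T.depth i + 1)) := by
            intro j hj
            rw [Vminus, Finset.mem_filter] at hj ⊢
            exact ⟨hA'sub hj.1, hj.2⟩
          have := bstar_mono (hbV A _ (le_refl A)) hsub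
          linarith
        · -- w was removed : the child of i on the path to w is a deleted edge
          have hdiw : T.desc i w := hrm w hw hwA'
          rw [hutilG, if_pos hdiw]
          set a := T.pathVx w (T.depth i + 1) with ha
          -- a is a child in E'
          have haE' : a ∈ E' ∧ (w = a ∨ T.desc a w) := by
            rw [hA', Finset.mem_filter] at hwA'
            push_neg at hwA'
            obtain ⟨c, hc, hcw⟩ := hwA' hw
            have hca : a = c := T.pathVx_eq_child his (hE' c hc)
              (by
                by_cases hwc : w = c
                · exact Or.inl hwc
                · exact Or.inr (hcw hwc))
            rw [hca]
            by_cases hwc : w = c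
            · exact ⟨hc, Or.inl hwc⟩
            · exact ⟨hc, Or.inr (hcw hwc)⟩
          -- every remaining agent lies in V_{-a} of the full tree
          have hsub : T.Vminus A' (T.pathVx w' (T.depth i + 1)) ⊆ T.Vminus A a := by
            intro j hj
            rw [Vminus, Finset.mem_filter] at hj
            have hjA' : j ∈ A' := hj.1
            rw [hA', Finset.mem_filter] at hjA'
            have := hjA'.2 a haE'.1
            rw [Vminus, Finset.mem_filter]
            exact ⟨hjA'.1, this.1, this.2⟩
          have := bstar_mono (hbV A _ (le_refl A)) hsub
          linarith
      · -- i gets zero utility in G'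
        have hutil' : T.util A' b w' vi i = 0 := by
          unfold util payment
          rw [if_neg hiw', if_neg hiw',
            if_neg (fun h => hd' ((T.onpath_iff his).mp h))]
          ring
        rw [hutil']
        exact hutilG_nonneg
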